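/- Let X be a metric space and let ℓ₁, ℓ₂ be lines in X. Then ℓ₁ and ℓ₂ are parallel if and only if there exist constant-speed geodesics γ₁, γ₂ : ℝ → X with images ℓ₁ and ℓ₂ respectively, and real constants A, B, C, such that d(γ₁(s), γ₂(t))² = A·(s−t)² + B·(s−t) + C for all s, t ∈ ℝ, i.e. d² is a quadratic function of (s−t). (Kleiner–Lott, 'Locally Collapsed 3-Manifolds', Sublemma 4.4, part (2).) -/

import Mathlib

/-- A map `γ : ℝ → X` into a metric space is a constant-speed geodesic if there
is `c ≥ 0` with `dist (γ s) (γ t) = c * |s - t|` for all `s t`. -/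
def IsConstSpeedGeodesic {X : Type*} [MetricSpace X] (γ : ℝ → X) : Prop :=
  ∃ c : ℝ, 0 ≤ c ∧ ∀ s t : ℝ, dist (γ s) (γ t) = c * |s - t|

/-- A line in a metric space: the image of an isometric embedding of `ℝ`. -/
def IsLine {X : Type*} [MetricSpace X] (L : Set X) : Prop :=
  ∃ γ : ℝ → X, (∀ s t : ℝ, dist (γ s) (γ t) = |s - t|) ∧ Set.range γ = L

/-- Two lines `L₁`, `L₂` in a metric space are parallel if there is a
distance-preserving bijection of `L₁ ∪ L₂` onto the union of two parallel
lines `ℝ × {0}` and `ℝ × {a}` in the Euclidean plane, carrying `L₁` onto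
`ℝ × {0}` and `L₂` onto `ℝ × {a}`. -/
def AreParallelLines {X : Type*} [MetricSpace X] (L₁ L₂ : Set X) : Prop :=
  ∃ a : ℝ, 0 ≤ a ∧ ∃ f : X → WithLp 2 (ℝ × ℝ),
    (∀ x ∈ L₁ ∪ L₂, ∀ y ∈ L₁ ∪ L₂, dist (f x) (f y) = dist x y) ∧
    f '' L₁ = {p : WithLp 2 (ℝ × ℝ) | ((WithLp.equiv 2 (ℝ × ℝ)) p).2 = 0} ∧
    f '' L₂ = {p : WithLp 2 (ℝ × ℝ) | ((WithLp.equiv 2 (ℝ × ℝ)) p).2 = a}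

lemma quad_aux' (p q r : ℝ) (h : ∀ t : ℝ, 1 ≤ t → p * t^2 ≤ q * t + r) : p ≤ 0 := by
  by_contra hp
  push_neg at hp
  have hd : 0 ≤ (|q| + |r| + 1)/p := by positivity
  have h1 : 1 ≤ (|q| + |r| + 1)/p + 1 := by linarith
  have h2 := h _ h1
  have key : p * ((|q| + |r| + 1)/p + 1) = |q| + |r| + 1 + p := by field_simp
  nlinarith [abs_nonneg q, abs_nonneg r, le_abs_self q, le_abs_self r]

lemma real_isometry' (g : ℝ → ℝ) (h : ∀ s t : ℝ, |g s - g t| = |s - t|) (s : ℝ) :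
    g s = g 0 + s * (g 1 - g 0) := by
  have h0 : (g s - g 0)^2 = s^2 := by rw [← sq_abs (g s - g 0), h, sq_abs]; ring
  have h1 : (g s - g 1)^2 = (s-1)^2 := by rw [← sq_abs (g s - g 1), h, sq_abs]
  have h2 : (g 1 - g 0)^2 = 1 := by rw [← sq_abs (g 1 - g 0), h]; norm_num
  have huv : (g s - g 0) * (g 1 - g 0) = s := by linear_combination (h0 - h1 + h2)/2
  linear_combination (g 1 - g 0) * huv - (g s - g 0) * h2

lemma dist_sq_L2 (p q : WithLp 2 (ℝ × ℝ)) :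
    dist p q ^ 2 = (p.fst - q.fst)^2 + (p.snd - q.snd)^2 := by
  rw [WithLp.prod_dist_eq_of_L2, Real.sq_sqrt (by positivity), Real.dist_eq, Real.dist_eq,
    sq_abs, sq_abs]

lemma dist_eq_of_sq_eq {X : Type*} [MetricSpace X] {Y : Type*} [MetricSpace Y]
    {x x' : X} {y y' : Y} (h : dist x x' ^ 2 = dist y y' ^ 2) : dist x x' = dist y y' := by
  have := Real.sqrt_sq (dist_nonneg (x := x) (y := x'))
  rw [← Real.sqrt_sq (dist_nonneg (x := x) (y := x')), h,
    Real.sqrt_sq (dist_nonneg (x := y) (y := y'))]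


set_option maxHeartbeats 1000000 in
/-- Kleiner–Lott, "Locally Collapsed 3-Manifolds", Sublemma 4.4(2): two lines in
a metric space are parallel iff they admit constant-speed parametrizations
`γ₁, γ₂` such that `dist (γ₁ s) (γ₂ t) ^ 2` is a quadratic function of `s - t`. -/
theorem areParallelLines_iff_quadratic {X : Type*} [MetricSpace X]
    (L₁ L₂ : Set X) (h₁ : IsLine L₁) (h₂ : IsLine L₂) :
    AreParallelLines L₁ L₂ ↔
      ∃ γ₁ γ₂ : ℝ → X, IsConstSpeedGeodesic γ₁ ∧ IsConstSpeedGeodesic γ₂ ∧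
        Set.range γ₁ = L₁ ∧ Set.range γ₂ = L₂ ∧
        ∃ A B C : ℝ, ∀ s t : ℝ,
          dist (γ₁ s) (γ₂ t) ^ 2 = A * (s - t) ^ 2 + B * (s - t) + C := by
  classical
  constructor
  · rintro ⟨a, ha, f, hf, hI1, hI2⟩
    obtain ⟨γ, hγ, hγr⟩ := h₁
    obtain ⟨δ, hδ, hδr⟩ := h₂
    have hγm : ∀ s, γ s ∈ L₁ := fun s => hγr ▸ Set.mem_range_self s
    have hδm : ∀ t, δ t ∈ L₂ := fun t => hδr ▸ Set.mem_range_self t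
    -- second coordinates
    have hsnd1 : ∀ s, (f (γ s)).snd = 0 := by
      intro s
      have : f (γ s) ∈ f '' L₁ := Set.mem_image_of_mem f (hγm s)
      rw [hI1] at this
      exact this
    have hsnd2 : ∀ t, (f (δ t)).snd = a := by
      intro t
      have : f (δ t) ∈ f '' L₂ := Set.mem_image_of_mem f (hδm t)
      rw [hI2] at this
      exact this
    set g₁ : ℝ → ℝ := fun s => (f (γ s)).fst with hg₁def
    set g₂ : ℝ → ℝ := fun t => (f (δ t)).fst with hg₂def
    have hg₁ : ∀ s t : ℝ, |g₁ s - g₁ t| = |s - t| := by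
      intro s t
      have hd : dist (f (γ s)) (f (γ t)) = |s - t| := by
        rw [hf _ (Or.inl (hγm s)) _ (Or.inl (hγm t)), hγ]
      have := dist_sq_L2 (f (γ s)) (f (γ t))
      rw [hd, hsnd1 s, hsnd1 t] at this
      have h2 : (g₁ s - g₁ t)^2 = |s - t|^2 := by simp only [hg₁def]; nlinarith [this]
      nlinarith [abs_nonneg (g₁ s - g₁ t), abs_nonneg (s - t), sq_abs (g₁ s - g₁ t),
        sq_abs (s - t), h2]
    have hg₂ : ∀ s t : ℝ, |g₂ s - g₂ t| = |s - t| := by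
      intro s t
      have hd : dist (f (δ s)) (f (δ t)) = |s - t| := by
        rw [hf _ (Or.inr (hδm s)) _ (Or.inr (hδm t)), hδ]
      have := dist_sq_L2 (f (δ s)) (f (δ t))
      rw [hd, hsnd2 s, hsnd2 t] at this
      have h2 : (g₂ s - g₂ t)^2 = |s - t|^2 := by simp only [hg₂def]; nlinarith [this]
      nlinarith [abs_nonneg (g₂ s - g₂ t), abs_nonneg (s - t), sq_abs (g₂ s - g₂ t),
        sq_abs (s - t), h2]
    set v₁ := g₁ 1 - g₁ 0 with hv₁def
    set v₂ := g₂ 1 - g₂ 0 with hv₂def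
    have hiso1 : ∀ s, g₁ s = g₁ 0 + s * v₁ := real_isometry' g₁ hg₁
    have hiso2 : ∀ t, g₂ t = g₂ 0 + t * v₂ := real_isometry' g₂ hg₂
    have hv1sq : v₁^2 = 1 := by rw [hv₁def, ← sq_abs, hg₁]; norm_num
    have hv2sq : v₂^2 = 1 := by rw [hv₂def, ← sq_abs, hg₂]; norm_num
    set σ := v₁ * v₂ with hσdef
    set b := v₂ * (g₁ 0 - g₂ 0) with hbdef
    have hσabs : |σ| = 1 := by
      rw [← Real.sqrt_sq_eq_abs]
      have : σ^2 = 1 := by rw [hσdef]; nlinarith [hv1sq, hv2sq]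
      rw [this, Real.sqrt_one]
    have hσne : σ ≠ 0 := by
      intro h0
      rw [h0, abs_zero] at hσabs
      norm_num at hσabs
    refine ⟨γ, fun t => δ (σ * t + b), ⟨1, zero_le_one, fun s t => by rw [hγ]; ring⟩,
      ⟨1, zero_le_one, fun s t => ?_⟩, hγr, ?_, 1, 0, a^2, fun s t => ?_⟩
    · rw [hδ]
      have : σ * s + b - (σ * t + b) = σ * (s - t) := by ring
      rw [this, abs_mul, hσabs]
    · rw [← hδr]
      ext x
      constructor
      · rintro ⟨t, rfl⟩; exact ⟨σ * t + b, rfl⟩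
      · rintro ⟨u, rfl⟩
        refine ⟨(u - b) / σ, ?_⟩
        congr 1
        field_simp
        simp
    · -- quadratic formula
      have hd : dist (γ s) (δ (σ * t + b)) = dist (f (γ s)) (f (δ (σ * t + b))) :=
        (hf _ (Or.inl (hγm s)) _ (Or.inr (hδm _))).symm
      rw [hd]
      rw [dist_sq_L2, hsnd1 s, hsnd2 (σ * t + b)]
      have e1 : (f (γ s)).fst = g₁ 0 + s * v₁ := hiso1 s
      have e2 : (f (δ (σ * t + b))).fst = g₂ 0 + (σ * t + b) * v₂ := hiso2 (σ * t + b)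
      have key : g₂ 0 + (σ * t + b) * v₂ = g₁ 0 + t * v₁ := by
        rw [hσdef, hbdef]
        linear_combination (v₁ * t + g₁ 0 - g₂ 0) * hv2sq
      rw [e1, e2, key]
      linear_combination (s - t)^2 * hv1sq
  · rintro ⟨γ₁, γ₂, ⟨c₁, hc₁0, hsp₁⟩, ⟨c₂, hc₂0, hsp₂⟩, hr₁, hr₂, A, B, C, hQ⟩
    -- speeds are positive
    have hc₁ : 0 < c₁ := by
      rcases hc₁0.lt_or_eq with h | h
      · exact h
      obtain ⟨γ, hγ, hγr⟩ := h₁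
      have h0 : γ 0 ∈ Set.range γ₁ := by rw [hr₁, ← hγr]; exact Set.mem_range_self 0
      have h1 : γ 1 ∈ Set.range γ₁ := by rw [hr₁, ← hγr]; exact Set.mem_range_self 1
      obtain ⟨s₀, hs₀⟩ := h0
      obtain ⟨s₁, hs₁⟩ := h1
      have : (1:ℝ) = c₁ * |s₀ - s₁| := by
        rw [← hsp₁ s₀ s₁, hs₀, hs₁, hγ]; norm_num
      rw [← h] at this
      simp at this
    have hc₂ : 0 < c₂ := by
      rcases hc₂0.lt_or_eq with h | h
      · exact h
      obtain ⟨δ, hδ, hδr⟩ := h₂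
      have h0 : δ 0 ∈ Set.range γ₂ := by rw [hr₂, ← hδr]; exact Set.mem_range_self 0
      have h1 : δ 1 ∈ Set.range γ₂ := by rw [hr₂, ← hδr]; exact Set.mem_range_self 1
      obtain ⟨s₀, hs₀⟩ := h0
      obtain ⟨s₁, hs₁⟩ := h1
      have : (1:ℝ) = c₂ * |s₀ - s₁| := by
        rw [← hsp₂ s₀ s₁, hs₀, hs₁, hδ]; norm_num
      rw [← h] at this
      simp at this
    set d₀ := dist (γ₁ 0) (γ₂ 0) with hd₀def
    have hd₀0 : 0 ≤ d₀ := dist_nonneg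
    have hC : d₀^2 = C := by have := hQ 0 0; simpa using this
    -- A = c₂ ^ 2
    have hAc₂ : A = c₂^2 := by
      have hle1 : A - c₂^2 ≤ 0 := by
        apply quad_aux' _ (B + 2*d₀*c₂) 0
        intro t ht
        have hDt : dist (γ₁ 0) (γ₂ t) ^ 2 = A * t^2 - B * t + C := by
          have := hQ 0 t; rw [this]; ring
        have tri : dist (γ₁ 0) (γ₂ t) ≤ d₀ + c₂ * t := by
          have h3 : dist (γ₂ 0) (γ₂ t) = c₂ * t := by
            rw [hsp₂ 0 t]
            rw [abs_of_nonpos (by linarith : (0:ℝ) - t ≤ 0)]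
            ring
          calc dist (γ₁ 0) (γ₂ t) ≤ dist (γ₁ 0) (γ₂ 0) + dist (γ₂ 0) (γ₂ t) := dist_triangle _ _ _
            _ = d₀ + c₂ * t := by rw [h3]
        have sq1 : dist (γ₁ 0) (γ₂ t) ^ 2 ≤ (d₀ + c₂ * t)^2 := by
          apply pow_le_pow_left₀ dist_nonneg tri
        nlinarith [hDt, sq1, hC]
      have hle2 : c₂^2 - A ≤ 0 := by
        apply quad_aux' _ (2*d₀*c₂ - B) (4*C)
        intro t ht
        have hDt : dist (γ₁ 0) (γ₂ t) ^ 2 = A * t^2 - B * t + C := by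
          have := hQ 0 t; rw [this]; ring
        have h3 : dist (γ₂ 0) (γ₂ t) = c₂ * t := by
          rw [hsp₂ 0 t, abs_of_nonpos (by linarith : (0:ℝ) - t ≤ 0)]; ring
        have tri : dist (γ₁ 0) (γ₂ t) ≤ d₀ + c₂ * t := by
          calc dist (γ₁ 0) (γ₂ t) ≤ dist (γ₁ 0) (γ₂ 0) + dist (γ₂ 0) (γ₂ t) := dist_triangle _ _ _
            _ = d₀ + c₂ * t := by rw [h3]
        have tri2 : c₂ * t ≤ d₀ + dist (γ₁ 0) (γ₂ t) := by
          calc c₂ * t = dist (γ₂ 0) (γ₂ t) := h3.symm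
            _ ≤ dist (γ₂ 0) (γ₁ 0) + dist (γ₁ 0) (γ₂ t) := dist_triangle _ _ _
            _ = d₀ + dist (γ₁ 0) (γ₂ t) := by rw [dist_comm]
        have sq2 : (c₂ * t)^2 ≤ (d₀ + dist (γ₁ 0) (γ₂ t))^2 := by
          apply pow_le_pow_left₀ (by positivity) tri2
        nlinarith [hDt, sq2, hC, mul_le_mul_of_nonneg_left tri (by linarith : (0:ℝ) ≤ 2*d₀),
          dist_nonneg (x := γ₁ 0) (y := γ₂ t)]
      linarith
    -- A = c₁ ^ 2
    have hAc₁ : A = c₁^2 := by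
      have hle1 : A - c₁^2 ≤ 0 := by
        apply quad_aux' _ (2*d₀*c₁ - B) 0
        intro s hs
        have hDt : dist (γ₁ s) (γ₂ 0) ^ 2 = A * s^2 + B * s + C := by
          have := hQ s 0; rw [this]; ring
        have h3 : dist (γ₁ 0) (γ₁ s) = c₁ * s := by
          rw [hsp₁ 0 s, abs_of_nonpos (by linarith : (0:ℝ) - s ≤ 0)]; ring
        have tri : dist (γ₁ s) (γ₂ 0) ≤ c₁ * s + d₀ := by
          calc dist (γ₁ s) (γ₂ 0) ≤ dist (γ₁ s) (γ₁ 0) + dist (γ₁ 0) (γ₂ 0) := dist_triangle _ _ _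
            _ = c₁ * s + d₀ := by rw [dist_comm, h3]
        have sq1 : dist (γ₁ s) (γ₂ 0) ^ 2 ≤ (c₁ * s + d₀)^2 := by
          apply pow_le_pow_left₀ dist_nonneg tri
        nlinarith [hDt, sq1, hC]
      have hle2 : c₁^2 - A ≤ 0 := by
        apply quad_aux' _ (2*d₀*c₁ + B) (4*C)
        intro s hs
        have hDt : dist (γ₁ s) (γ₂ 0) ^ 2 = A * s^2 + B * s + C := by
          have := hQ s 0; rw [this]; ring
        have h3 : dist (γ₁ 0) (γ₁ s) = c₁ * s := by
          rw [hsp₁ 0 s, abs_of_nonpos (by linarith : (0:ℝ) - s ≤ 0)]; ring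
        have tri : dist (γ₁ s) (γ₂ 0) ≤ c₁ * s + d₀ := by
          calc dist (γ₁ s) (γ₂ 0) ≤ dist (γ₁ s) (γ₁ 0) + dist (γ₁ 0) (γ₂ 0) := dist_triangle _ _ _
            _ = c₁ * s + d₀ := by rw [dist_comm, h3]
        have tri2 : c₁ * s ≤ d₀ + dist (γ₁ s) (γ₂ 0) := by
          calc c₁ * s = dist (γ₁ 0) (γ₁ s) := h3.symm
            _ ≤ dist (γ₁ 0) (γ₂ 0) + dist (γ₂ 0) (γ₁ s) := dist_triangle _ _ _
            _ = d₀ + dist (γ₁ s) (γ₂ 0) := by rw [dist_comm (γ₂ 0)]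
        have sq2 : (c₁ * s)^2 ≤ (d₀ + dist (γ₁ s) (γ₂ 0))^2 := by
          apply pow_le_pow_left₀ (by positivity) tri2
        nlinarith [hDt, sq2, hC, mul_le_mul_of_nonneg_left tri (by linarith : (0:ℝ) ≤ 2*d₀),
          dist_nonneg (x := γ₁ s) (y := γ₂ 0)]
      linarith
    have hcc : c₁ = c₂ := by
      have hmul : (c₁ - c₂) * (c₁ + c₂) = 0 := by linear_combination hAc₂ - hAc₁
      rcases mul_eq_zero.1 hmul with h | h
      · linarith
      · linarith
    set c := c₁ with hcdef
    have hcne : c ≠ 0 := ne_of_gt hc₁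
    -- normalized parametrizations
    set e := B / (2 * c^2) with hedef
    set δ₁ : ℝ → X := fun s => γ₁ (s / c) with hδ₁def
    set δ₂ : ℝ → X := fun t => γ₂ (t / c + e) with hδ₂def
    have hδ₁d : ∀ s t, dist (δ₁ s) (δ₁ t) = |s - t| := by
      intro s t
      simp only [hδ₁def]
      rw [hsp₁]
      have h4 : s / c - t / c = (s - t) / c := by ring
      rw [h4, abs_div, abs_of_pos hc₁]
      field_simp
    have hδ₂d : ∀ s t, dist (δ₂ s) (δ₂ t) = |s - t| := by
      intro s t
      simp only [hδ₂def]
      rw [hsp₂]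
      have h4 : s / c + e - (t / c + e) = (s - t) / c := by ring
      rw [h4, abs_div, abs_of_pos hc₁]
      rw [← hcc]
      field_simp
    set K := C - B^2 / (4 * c^2) with hKdef
    have hδQ : ∀ s t, dist (δ₁ s) (δ₂ t) ^ 2 = (s - t)^2 + K := by
      intro s t
      simp only [hδ₁def, hδ₂def]
      rw [hQ, hAc₁, hKdef, hedef]
      field_simp
      ring
    have hK0 : 0 ≤ K := by
      have := hδQ 0 0
      nlinarith [sq_nonneg (dist (δ₁ 0) (δ₂ 0))]
    set a := Real.sqrt K with hadef
    have ha0 : 0 ≤ a := Real.sqrt_nonneg K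
    have ha2 : a^2 = K := Real.sq_sqrt hK0
    have hrδ₁ : Set.range δ₁ = L₁ := by
      rw [← hr₁]
      ext x
      constructor
      · rintro ⟨s, rfl⟩; exact ⟨s / c, rfl⟩
      · rintro ⟨u, rfl⟩
        exact ⟨c * u, by simp only [hδ₁def]; congr 1; field_simp⟩
    have hrδ₂ : Set.range δ₂ = L₂ := by
      rw [← hr₂]
      ext x
      constructor
      · rintro ⟨s, rfl⟩; exact ⟨s / c + e, rfl⟩
      · rintro ⟨u, rfl⟩
        exact ⟨c * (u - e), by simp only [hδ₂def]; congr 1; field_simp; ring⟩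
    have hinj₁ : Function.Injective δ₁ := by
      intro s t h
      have h5 : |s - t| = 0 := by rw [← hδ₁d s t, h, dist_self]
      have h6 := abs_eq_zero.mp h5
      linarith [sub_eq_zero.mp h6]
    have hinj₂ : Function.Injective δ₂ := by
      intro s t h
      have h5 : |s - t| = 0 := by rw [← hδ₂d s t, h, dist_self]
      have h6 := abs_eq_zero.mp h5
      linarith [sub_eq_zero.mp h6]
    have hret₁ : ∀ x ∈ L₁, δ₁ (Function.invFun δ₁ x) = x := by
      intro x hx
      apply Function.invFun_eq
      rw [← hrδ₁] at hx
      exact hx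
    have hret₂ : ∀ x ∈ L₂, δ₂ (Function.invFun δ₂ x) = x := by
      intro x hx
      apply Function.invFun_eq
      rw [← hrδ₂] at hx
      exact hx
    refine ⟨a, ha0, fun x =>
      if x ∈ L₁ then (WithLp.equiv 2 (ℝ × ℝ)).symm (Function.invFun δ₁ x, 0)
      else (WithLp.equiv 2 (ℝ × ℝ)).symm (Function.invFun δ₂ x, a), ?_, ?_, ?_⟩
    · -- distance preserving
      intro x hx y hy
      by_cases hx1 : x ∈ L₁ <;> by_cases hy1 : y ∈ L₁
      · simp only [if_pos hx1, if_pos hy1]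
        apply dist_eq_of_sq_eq
        rw [dist_sq_L2]
        have ex : δ₁ (Function.invFun δ₁ x) = x := hret₁ x hx1
        have ey : δ₁ (Function.invFun δ₁ y) = y := hret₁ y hy1
        have := hδ₁d (Function.invFun δ₁ x) (Function.invFun δ₁ y)
        rw [ex, ey] at this
        simp only [WithLp.equiv_symm_apply, WithLp.toLp_fst, WithLp.toLp_snd]
        rw [this, sq_abs]
        ring
      · have hy2 : y ∈ L₂ := hy.resolve_left hy1
        simp only [if_pos hx1, if_neg hy1]
        apply dist_eq_of_sq_eq
        rw [dist_sq_L2]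
        have ex : δ₁ (Function.invFun δ₁ x) = x := hret₁ x hx1
        have ey : δ₂ (Function.invFun δ₂ y) = y := hret₂ y hy2
        have := hδQ (Function.invFun δ₁ x) (Function.invFun δ₂ y)
        rw [ex, ey] at this
        simp only [WithLp.equiv_symm_apply, WithLp.toLp_fst, WithLp.toLp_snd]
        rw [this]
        nlinarith [ha2]
      · have hx2 : x ∈ L₂ := hx.resolve_left hx1
        simp only [if_neg hx1, if_pos hy1]
        apply dist_eq_of_sq_eq
        rw [dist_sq_L2]
        have ex : δ₂ (Function.invFun δ₂ x) = x := hret₂ x hx2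
        have ey : δ₁ (Function.invFun δ₁ y) = y := hret₁ y hy1
        have := hδQ (Function.invFun δ₁ y) (Function.invFun δ₂ x)
        rw [ex, ey] at this
        simp only [WithLp.equiv_symm_apply, WithLp.toLp_fst, WithLp.toLp_snd]
        rw [dist_comm x y, this]
        nlinarith [ha2]
      · have hx2 : x ∈ L₂ := hx.resolve_left hx1
        have hy2 : y ∈ L₂ := hy.resolve_left hy1
        simp only [if_neg hx1, if_neg hy1]
        apply dist_eq_of_sq_eq
        rw [dist_sq_L2]
        have ex : δ₂ (Function.invFun δ₂ x) = x := hret₂ x hx2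
        have ey : δ₂ (Function.invFun δ₂ y) = y := hret₂ y hy2
        have := hδ₂d (Function.invFun δ₂ x) (Function.invFun δ₂ y)
        rw [ex, ey] at this
        simp only [WithLp.equiv_symm_apply, WithLp.toLp_fst, WithLp.toLp_snd]
        rw [this, sq_abs]
        ring
    · -- image of L₁
      ext p
      constructor
      · rintro ⟨x, hx, rfl⟩
        simp only [if_pos hx, Set.mem_setOf_eq]
        rfl
      · intro hp
        refine ⟨δ₁ ((WithLp.equiv 2 (ℝ × ℝ)) p).1, ?_, ?_⟩
        · rw [← hrδ₁]; exact Set.mem_range_self _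
        · have hmem : δ₁ ((WithLp.equiv 2 (ℝ × ℝ)) p).1 ∈ L₁ := by
            rw [← hrδ₁]; exact Set.mem_range_self _
          simp only [if_pos hmem]
          have : Function.invFun δ₁ (δ₁ ((WithLp.equiv 2 (ℝ × ℝ)) p).1)
              = ((WithLp.equiv 2 (ℝ × ℝ)) p).1 := hinj₁ (hret₁ _ hmem)
          rw [this]
          apply (WithLp.equiv 2 (ℝ × ℝ)).symm_apply_eq.mpr
          have hp2 : ((WithLp.equiv 2 (ℝ × ℝ)) p).2 = 0 := hp
          ext
          · rfl
          · exact hp2.symm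
    · -- image of L₂
      have ha_inter : ∀ y, y ∈ L₁ → y ∈ L₂ → a = 0 := by
        intro y hy1 hy2
        rw [← hrδ₁] at hy1
        rw [← hrδ₂] at hy2
        obtain ⟨s, rfl⟩ := hy1
        obtain ⟨t, ht⟩ := hy2
        have := hδQ s t
        rw [ht, dist_self] at this
        have : (s - t)^2 + K = 0 := by linarith [this]
        have hK : K = 0 := by nlinarith [sq_nonneg (s - t)]
        rw [hadef, hK, Real.sqrt_zero]
      ext p
      constructor
      · rintro ⟨y, hy2, rfl⟩
        by_cases hy1 : y ∈ L₁
        · simp only [if_pos hy1, Set.mem_setOf_eq]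
          have := ha_inter y hy1 hy2
          rw [this]
          rfl
        · simp only [if_neg hy1, Set.mem_setOf_eq]
          rfl
      · intro hp
        have hp2 : ((WithLp.equiv 2 (ℝ × ℝ)) p).2 = a := hp
        refine ⟨δ₂ ((WithLp.equiv 2 (ℝ × ℝ)) p).1, ?_, ?_⟩
        · rw [← hrδ₂]; exact Set.mem_range_self _
        · set r := ((WithLp.equiv 2 (ℝ × ℝ)) p).1 with hrdef
          by_cases hmem1 : δ₂ r ∈ L₁
          · simp only [if_pos hmem1]
            have ha0' : a = 0 := ha_inter _ hmem1 (by rw [← hrδ₂]; exact Set.mem_range_self _)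
            have hx : δ₁ (Function.invFun δ₁ (δ₂ r)) = δ₂ r := hret₁ _ hmem1
            have hQ0 := hδQ (Function.invFun δ₁ (δ₂ r)) r
            rw [hx, dist_self] at hQ0
            have hK : K = 0 := by
              have := ha2
              rw [ha0'] at this
              nlinarith [this]
            have hs : Function.invFun δ₁ (δ₂ r) = r := by
              nlinarith [hQ0, hK, sq_nonneg (Function.invFun δ₁ (δ₂ r) - r)]
            rw [hs]
            apply (WithLp.equiv 2 (ℝ × ℝ)).symm_apply_eq.mpr
            ext
            · rfl
            · rw [hp2, ha0']
          · simp only [if_neg hmem1]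
            have hmem2 : δ₂ r ∈ L₂ := by rw [← hrδ₂]; exact Set.mem_range_self _
            have : Function.invFun δ₂ (δ₂ r) = r := hinj₂ (hret₂ _ hmem2)
            rw [this]
            apply (WithLp.equiv 2 (ℝ × ℝ)).symm_apply_eq.mpr
            ext
            · rfl
            · exact hp2.symm
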